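/- arXiv:1005.3460 — 5 statements merged into one kernel-verified Lean document; each statement's English description precedes it below -/
import Mathlib

section
/- If G is a finite subgroup of the multiplicative group of a division ring D, then the natural number |G|, viewed as an element of D (i.e., |G|·1), is nonzero. -/
/-- The order of a finite multiplicative subgroup of a division ring,
viewed as an element of the division ring, is nonzero. -/
theorem card_of_finite_subgroup_ne_zero (D : Type*) [DivisionRing D]
    (G : Subgroup Dˣ) [Fintype G] :
    (Fintype.card G : D) ≠ 0 := by
  intro h
  set p := ringChar D with hp
  have hdvd : p ∣ Fintype.card G := (ringChar.spec D _).mp h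
  rcases CharP.char_is_prime_or_zero D p with hprime | hzero
  · haveI : Fact p.Prime := ⟨hprime⟩
    haveI : CharP D p := ringChar.charP D
    obtain ⟨g, hg⟩ := exists_prime_orderOf_dvd_card p hdvd
    have hgu : orderOf (g : Dˣ) = p := by
      rw [← hg]; exact orderOf_injective G.subtype Subtype.coe_injective g
    have hx : ((g : Dˣ) : D) ^ p = 1 := by
      have : ((g : Dˣ) : D) ^ p = (((g : Dˣ) ^ p : Dˣ) : D) := by push_cast; ring
      rw [this, ← hgu, pow_orderOf_eq_one]; rfl
    have hsub : (((g : Dˣ) : D) - 1) ^ p = 0 := by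
      rw [sub_pow_char_of_commute p (Commute.one_right _), hx, one_pow, sub_self]
    have : ((g : Dˣ) : D) = 1 := by
      have := pow_eq_zero_iff hprime.ne_zero |>.mp hsub
      exact sub_eq_zero.mp this
    have : (g : Dˣ) = 1 := Units.ext this
    rw [this, orderOf_one] at hgu
    exact hprime.ne_one hgu.symm
  · rw [hzero] at hdvd
    exact Fintype.card_ne_zero (zero_dvd_iff.mp hdvd)
end

section
/- Let G be a finite subgroup of the multiplicative group of a division ring D, and suppose a, b ∈ D satisfy {g + a : g ∈ G} = {g·b : g ∈ G} as subsets of D. Then a = 0 or G is the trivial group. -/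
/-- If `G` is a finite multiplicative subgroup of a division ring `D` and
`G + a = G·b` for some `a, b ∈ D`, then `a = 0` or `G` is trivial. -/
theorem shift_eq_dilate_imp (D : Type*) [DivisionRing D]
    (G : Subgroup Dˣ) [Fintype G] (a b : D)
    (h : {x : D | ∃ g ∈ G, ((g : D) + a = x)} =
         {x : D | ∃ g ∈ G, ((g : D) * b = x)}) :
    a = 0 ∨ G = ⊥ := by
  classical
  by_cases hb : b = 0
  · -- RHS set is {0}, so every g ∈ G equals -a, hence G is trivial
    right
    subst hb
    have key : ∀ g ∈ G, (g : D) + a = 0 := by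
      intro g hg
      have h1 : ((g : D) + a) ∈ {x : D | ∃ g ∈ G, ((g : D) * (0:D) = x)} := by
        rw [← h]; exact ⟨g, hg, rfl⟩
      obtain ⟨g', _, hg'⟩ := h1
      rw [mul_zero] at hg'
      exact hg'.symm
    rw [Subgroup.eq_bot_iff_forall]
    intro g hg
    have h1 := key g hg
    have h2 := key 1 (one_mem G)
    exact Units.ext (add_right_cancel (h1.trans h2.symm))
  · by_cases hG : G = ⊥
    · exact Or.inr hG
    · left
      -- get a nontrivial element u of G
      obtain ⟨u, hu⟩ : ∃ u : G, u ≠ 1 := by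
        by_contra hc
        push_neg at hc
        apply hG
        rw [Subgroup.eq_bot_iff_forall]
        intro g hg
        have := hc ⟨g, hg⟩
        simpa [Subtype.ext_iff] using this
      set S : D := ∑ g : G, ((g : Dˣ) : D) with hS
      -- S * u = S
      have hSu : S * ((u : Dˣ) : D) = S := by
        rw [hS, Finset.sum_mul]
        exact Fintype.sum_equiv (Equiv.mulRight u)
          (fun g => ((g : Dˣ) : D) * ((u : Dˣ) : D))
          (fun g => ((g : Dˣ) : D)) (by intro g; simp)
      -- hence S = 0
      have hS0 : S = 0 := by
        have h1 : S * (((u : Dˣ) : D) - 1) = 0 := by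
          rw [mul_sub, hSu, mul_one, sub_self]
        rcases mul_eq_zero.mp h1 with h2 | h2
        · exact h2
        · exact absurd (Subtype.ext (Units.ext (sub_eq_zero.mp h2))) hu
      -- set up the Finset equality
      have hst : (Finset.univ.image (fun g : G => ((g : Dˣ) : D) + a)) =
                 (Finset.univ.image (fun g : G => ((g : Dˣ) : D) * b)) := by
        apply Finset.coe_injective
        simp only [Finset.coe_image, Finset.coe_univ, Set.image_univ]
        ext x
        simp only [Set.mem_range]
        constructor
        · rintro ⟨g, rfl⟩
          have : ((g : Dˣ) : D) + a ∈ {x : D | ∃ g ∈ G, ((g : D) * b = x)} := by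
            rw [← h]; exact ⟨g, g.2, rfl⟩
          obtain ⟨g', hg', hgx⟩ := this
          exact ⟨⟨g', hg'⟩, hgx⟩
        · rintro ⟨g, rfl⟩
          have : ((g : Dˣ) : D) * b ∈ {x : D | ∃ g ∈ G, ((g : D) + a = x)} := by
            rw [h]; exact ⟨g, g.2, rfl⟩
          obtain ⟨g', hg', hgx⟩ := this
          exact ⟨⟨g', hg'⟩, hgx⟩
      -- sums over two images
      have hinj1 : ∀ x ∈ (Finset.univ : Finset G), ∀ y ∈ (Finset.univ : Finset G),
          ((x : Dˣ) : D) + a = ((y : Dˣ) : D) + a → x = y := by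
        intro x _ y _ hxy
        exact Subtype.ext (Units.ext (add_right_cancel hxy))
      have hinj2 : ∀ x ∈ (Finset.univ : Finset G), ∀ y ∈ (Finset.univ : Finset G),
          ((x : Dˣ) : D) * b = ((y : Dˣ) : D) * b → x = y := by
        intro x _ y _ hxy
        exact Subtype.ext (Units.ext (mul_right_cancel₀ hb hxy))
      have hsum : ∑ g : G, (((g : Dˣ) : D) + a) = ∑ g : G, ((g : Dˣ) : D) * b := by
        have e1 := Finset.sum_image (f := fun x : D => x) hinj1
        have e2 := Finset.sum_image (f := fun x : D => x) hinj2
        rw [← e1, ← e2, hst]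
      -- compute both sides
      have hL : ∑ g : G, (((g : Dˣ) : D) + a) = S + (Fintype.card G) • a := by
        rw [Finset.sum_add_distrib, Finset.sum_const, Finset.card_univ, hS]
      have hR : ∑ g : G, ((g : Dˣ) : D) * b = S * b := by
        rw [hS, Finset.sum_mul]
      rw [hL, hR, hS0, zero_mul, zero_add] at hsum
      -- now (card G) • a = 0; show (card G : D) ≠ 0
      have hcard : ((Fintype.card G : ℕ) : D) * a = 0 := by
        rw [← nsmul_eq_mul]; exact hsum
      have hne : ((Fintype.card G : ℕ) : D) ≠ 0 := by
        intro hc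
        have hdvd : ringChar D ∣ Fintype.card G :=
          (CharP.cast_eq_zero_iff D (ringChar D) _).mp hc
        rcases CharP.char_is_prime_or_zero D (ringChar D) with hp | hp
        · -- char p prime dividing |G| : get order-p element, contradiction
          haveI : Fact (ringChar D).Prime := ⟨hp⟩
          obtain ⟨g, hg⟩ := exists_prime_orderOf_dvd_card (ringChar D) hdvd
          have hg1 : ((g : Dˣ) : D) ^ (ringChar D) = 1 := by
            have : g ^ (ringChar D) = 1 := by
              rw [← hg]; exact pow_orderOf_eq_one g
            have := congrArg (fun x : G => ((x : Dˣ) : D)) this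
            simpa using this
          have : (((g : Dˣ) : D) - 1) ^ (ringChar D) = 0 := by
            rw [sub_pow_char_of_commute (ringChar D) (Commute.one_right _), hg1, one_pow,
              sub_self]
          have hgeq : ((g : Dˣ) : D) = 1 := by
            exact sub_eq_zero.mp (pow_eq_zero_iff hp.ne_zero |>.mp this)
          have : g = 1 := Subtype.ext (Units.ext hgeq)
          rw [this, orderOf_one] at hg
          exact hp.one_lt.ne hg
        · rw [hp] at hdvd
          have := Nat.eq_zero_of_zero_dvd hdvd
          exact (Fintype.card_pos).ne' this
      rcases mul_eq_zero.mp hcard with h0 | h0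
      · exact absurd h0 hne
      · exact h0
end

section
/- If a division ring D of prime characteristic p contains a finite subgroup G of its multiplicative group, then G is cyclic. -/
open scoped Pointwise

/-- A finite multiplicative subgroup of a division ring of prime
characteristic is cyclic. -/
theorem finite_subgroup_charP_isCyclic (D : Type*) [DivisionRing D] (p : ℕ)
    (hp : p.Prime) [CharP D p] (G : Subgroup Dˣ) [Finite G] :
    IsCyclic G := by
  haveI : Fact p.Prime := ⟨hp⟩
  letI : Algebra (ZMod p) D := ZMod.algebra D p
  set S : Set D := ((↑) : Dˣ → D) '' (G : Set Dˣ) with hS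
  have hSfin : S.Finite := (Set.toFinite (G : Set Dˣ)).image _
  have hSmul : S * S ⊆ S := by
    rintro x hx
    rw [Set.mem_mul] at hx
    obtain ⟨a, ⟨u, hu, rfl⟩, b, ⟨v, hv, rfl⟩, rfl⟩ := hx
    exact ⟨u * v, mul_mem hu hv, by simp⟩
  have h1S : (1 : D) ∈ S := ⟨1, one_mem G, rfl⟩
  set E : Submodule (ZMod p) D := Submodule.span (ZMod p) S with hE
  have hmulE : ∀ a ∈ E, ∀ b ∈ E, a * b ∈ E := by
    intro a ha b hb
    have : E * E ≤ E := by
      rw [hE, Submodule.span_mul_span]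
      exact Submodule.span_mono hSmul
    exact this (Submodule.mul_mem_mul ha hb)
  let R : Subring D :=
    { carrier := (E : Set D)
      mul_mem' := fun ha hb => hmulE _ ha _ hb
      one_mem' := Submodule.subset_span h1S
      add_mem' := fun ha hb => E.add_mem ha hb
      zero_mem' := E.zero_mem
      neg_mem' := fun ha => E.neg_mem ha }
  haveI : Module.Finite (ZMod p) E := Module.Finite.span_of_finite _ hSfin
  haveI : Finite E := Module.finite_of_finite (ZMod p)
  haveI : Finite R := by
    have : Finite (E : Set D) := ‹Finite E›
    exact this
  letI : Field R := (Finite.isDomain_to_isField R).toField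
  have hSR : S ⊆ (R : Set D) := Submodule.subset_span
  let f : G →* R := {
    toFun := fun g => ⟨(g : Dˣ), hSR ⟨g, g.2, rfl⟩⟩
    map_one' := rfl
    map_mul' := fun a b => rfl }
  have hf : Function.Injective f := by
    intro a b hab
    have := congrArg Subtype.val hab
    exact Subtype.ext (Units.ext this)
  exact isCyclic_of_subgroup_isDomain f hf
end

section
/- If a division ring D has prime characteristic p and G is a finite subgroup of the multiplicative group D^*, then p does not divide the order of G. -/
/-- If a division ring has prime characteristic `p`, then `p` does not divide
the order of any finite multiplicative subgroup. -/
theorem charP_not_dvd_card_subgroup (D : Type*) [DivisionRing D] (p : ℕ)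
    (hp : p.Prime) [CharP D p] (G : Subgroup Dˣ) [Fintype G] :
    ¬ p ∣ Fintype.card G := by
  intro hdvd
  haveI : Fact p.Prime := ⟨hp⟩
  obtain ⟨g, hg⟩ := exists_prime_orderOf_dvd_card p hdvd
  have hgp : ((g : Dˣ) : D) ^ p = 1 := by
    have : g ^ p = 1 := by rw [← hg]; exact pow_orderOf_eq_one g
    have := congrArg (fun x : G => ((x : Dˣ) : D)) this
    simpa using this
  have hfact : (((g : Dˣ) : D) - 1) ^ p = 0 := by
    have hexp : ExpChar D p := ExpChar.prime hp
    rw [sub_pow_char_of_commute p (Commute.one_right _), hgp, one_pow, sub_self]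
  have : ((g : Dˣ) : D) - 1 = 0 := pow_eq_zero_iff hp.ne_zero |>.mp hfact
  have hg1 : ((g : Dˣ) : D) = 1 := by exact sub_eq_zero.mp this
  have : (g : Dˣ) = 1 := Units.ext (by simpa using hg1)
  have : g = 1 := Subtype.ext this
  rw [this, orderOf_one] at hg
  exact hp.one_lt.ne' hg.symm
end

section
/- Let G be a nontrivial finite additive subgroup of a division ring D and let D_G = {a ∈ D : G·a ⊆ G}. Then D_G is a finite subfield of D (in particular, D_G is commutative). -/
/-- For a nontrivial finite additive subgroup `G` of a division ring `D`,
the set `D_G = {a : G·a ⊆ G}` is a finite subfield of `D`; in particular it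
is commutative. -/
theorem DG_is_finite_subfield (D : Type*) [DivisionRing D]
    (G : AddSubgroup D) [Finite G] (hG : Nontrivial G) :
    (∃ S : Subfield D, (S : Set D) = {a : D | ∀ g ∈ G, g * a ∈ G}) ∧
    {a : D | ∀ g ∈ G, g * a ∈ G}.Finite ∧
    (∀ a ∈ {a : D | ∀ g ∈ G, g * a ∈ G}, ∀ b ∈ {a : D | ∀ g ∈ G, g * a ∈ G},
      a * b = b * a) := by
  -- the subring D_G
  set S : Subring D :=
    { carrier := {a : D | ∀ g ∈ G, g * a ∈ G}
      mul_mem' := fun {a b} ha hb g hg => by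
        rw [← mul_assoc]; exact hb _ (ha g hg)
      one_mem' := fun g hg => by simpa using hg
      add_mem' := fun {a b} ha hb g hg => by
        rw [mul_add]; exact G.add_mem (ha g hg) (hb g hg)
      zero_mem' := fun g hg => by simpa using G.zero_mem
      neg_mem' := fun {a} ha g hg => by
        rw [mul_neg]; exact G.neg_mem (ha g hg) } with hSdef
  -- S is finite
  haveI hSfin : Finite S := by
    obtain ⟨g₀, hg₀⟩ := exists_ne (0 : G)
    have hg₀' : (g₀ : D) ≠ 0 := by
      intro h
      exact hg₀ (by ext; simpa using h)
    have hf : Function.Injective (fun a : S => (⟨(g₀ : D) * a, a.2 g₀ g₀.2⟩ : G)) := by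
      intro a b h
      have h' : (g₀ : D) * a = (g₀ : D) * b := congrArg Subtype.val h
      exact Subtype.ext (mul_left_cancel₀ hg₀' h')
    exact Finite.of_injective _ hf
  -- S is closed under inverses
  have hinv : ∀ a ∈ S, a⁻¹ ∈ S := by
    intro a ha
    rcases eq_or_ne a 0 with rfl | hne
    · simpa using S.zero_mem
    · have hfi : Function.Injective (fun x : S => (⟨a, ha⟩ : S) * x) := by
        intro x y h
        have h' : a * (x : D) = a * (y : D) := congrArg Subtype.val h
        exact Subtype.ext (mul_left_cancel₀ hne h')
      obtain ⟨x, hx⟩ := (Finite.injective_iff_surjective.mp hfi) 1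
      have hx' : a * (x : D) = 1 := congrArg Subtype.val hx
      have : a⁻¹ = (x : D) := inv_eq_of_mul_eq_one_right hx'
      rw [this]
      exact x.2
  -- the subfield
  set F : Subfield D := { S with inv_mem' := hinv } with hFdef
  haveI hFfin : Finite F := hSfin
  refine ⟨⟨F, rfl⟩, ?_, ?_⟩
  · exact Set.finite_coe_iff.mp hSfin
  · intro a ha b hb
    have := mul_comm (⟨a, ha⟩ : F) (⟨b, hb⟩ : F)
    exact congrArg Subtype.val this
end
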